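/- Let n ≥ 2, let a₀, a₁, …, aₙ, b : ℝ → ℝ with a₀(t) ≠ 0 for all t, and define f : ℝ × ℝⁿ → ℝ by f(t,x) = b(t)/a₀(t) − Σ_{j=1}^{n} (a_{n−j+1}(t)/a₀(t))·xʲ (so that the first-order system associated to the non-homogeneous linear ODE a₀ y⁽ⁿ⁾ + a₁ y⁽ⁿ⁻¹⁾ + … + a_{n−1} y' + aₙ y = b has Xⁱ(t,x) = xⁱ⁺¹ for i ≤ n−1 and Xⁿ(t,x) = f(t,x)). Then the jet geometric Yang–Mills energy produced by this ODE satisfies, for all (t,x), EYM(t,x) = (1/4)[ n − 1 + 2·a₂(t)/a₀(t) + Σ_{j=2}^{n} a_j(t)²/a₀(t)² ]; in particular it does not depend on x nor on the non-homogeneity term b(t). -/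

import Mathlib

/-- Partial derivative of `g : ℝⁿ → ℝ` at `x` in the `j`-th coordinate direction. -/
noncomputable def pd {n : ℕ} (g : (Fin n → ℝ) → ℝ) (x : Fin n → ℝ) (j : Fin n) : ℝ :=
  fderiv ℝ g x (Pi.single j 1)

/-- The electromagnetic matrix produced by the first-order ODE system
`dxⁱ/dt = Xⁱ(t,x)`: `F_{ij}(t,x) = (1/2)(∂Xⁱ/∂xʲ - ∂Xʲ/∂xⁱ)`. -/
noncomputable def emF {n : ℕ} (X : ℝ → (Fin n → ℝ) → Fin n → ℝ)
    (t : ℝ) (x : Fin n → ℝ) (i j : Fin n) : ℝ :=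
  (1 / 2) * (pd (fun y => X t y i) x j - pd (fun y => X t y j) x i)

/-- The first-order system associated to the superior order ODE
`y⁽ⁿ⁾ = f(t, y, y', …, y⁽ⁿ⁻¹⁾)` via `x¹ = y, …, xⁿ = y⁽ⁿ⁻¹⁾` (0-based indexing):
`Xⁱ(t,x) = xⁱ⁺¹` for `i < n-1` and `Xⁿ⁻¹(t,x) = f(t,x)`. -/
def sodeX (n : ℕ) (f : ℝ → (Fin n → ℝ) → ℝ) : ℝ → (Fin n → ℝ) → Fin n → ℝ :=
  fun t x i => if h : (i : ℕ) + 1 < n then x ⟨(i : ℕ) + 1, h⟩ else f t x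



lemma ifsq (u v : ℕ) (r : ℝ) :
    (if u < v then (1/2 * ((if u+1 = v then (1:ℝ) else 0) + 0))^2 else 0)
    = if u+1 = v then 1/4 else 0 := by
  split_ifs with h h' h'
  · norm_num
  · norm_num
  · omega
  · norm_num

lemma key_sum (m : ℕ) (c : ℕ → ℝ) :
    ∑ j : Fin (m+2), ∑ i : Fin (m+2),
      (if (i:ℕ) < (j:ℕ) then
        (1/2 * ((if (i:ℕ)+1 = (j:ℕ) then (1:ℝ) else 0)
          + (if (j:ℕ) = m+1 then c (i:ℕ) else 0)))^2 else 0)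
    = 1/4 * ((m:ℝ) + 1 + 2 * c m + ∑ i ∈ Finset.range (m+1), c i ^ 2) := by
  rw [Fin.sum_univ_castSucc]
  have h1 : ∀ j : Fin (m+1), ∑ i : Fin (m+2),
      (if (i:ℕ) < ((j.castSucc : Fin (m+2)):ℕ) then
        (1/2 * ((if (i:ℕ)+1 = ((j.castSucc : Fin (m+2)):ℕ) then (1:ℝ) else 0)
          + (if ((j.castSucc : Fin (m+2)):ℕ) = m+1 then c (i:ℕ) else 0)))^2 else 0)
      = if (j:ℕ) = 0 then 0 else 1/4 := by
    intro j
    have hj : ((j.castSucc : Fin (m+2)):ℕ) = (j:ℕ) := rfl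
    have hjm : (j:ℕ) ≤ m := by omega
    rw [Finset.sum_congr rfl (fun i _ => by
      rw [hj, if_neg (by omega : ¬ (j:ℕ) = m+1), ifsq (i:ℕ) (j:ℕ) (c (i:ℕ))])]
    rw [Fin.sum_univ_eq_sum_range (fun k => if k+1 = (j:ℕ) then (1/4:ℝ) else 0) (m+2)]
    rcases hj' : (j:ℕ) with _ | jw
    · simp
    · rw [if_neg (by omega)]
      rw [Finset.sum_congr rfl (fun k _ => if_congr (by omega : (k+1 = jw+1) ↔ (k = jw)) rfl rfl)]
      rw [Finset.sum_ite_eq' (Finset.range (m+2)) jw (fun _ => (1/4:ℝ))]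
      rw [if_pos (Finset.mem_range.2 (by omega))]
  rw [Finset.sum_congr rfl (fun j _ => h1 j)]
  have h2 : ∑ j : Fin (m+1), (if (j:ℕ) = 0 then (0:ℝ) else 1/4) = m * (1/4) := by
    rw [Fin.sum_univ_eq_sum_range (fun k => if k = 0 then (0:ℝ) else 1/4) (m+1)]
    rw [Finset.sum_range_succ']
    simp
  rw [h2]
  have hlast : ((Fin.last (m+1) : Fin (m+2)):ℕ) = m+1 := rfl
  rw [Fin.sum_univ_eq_sum_range (fun k =>
    (if k < ((Fin.last (m+1) : Fin (m+2)):ℕ) then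
        (1/2 * ((if k+1 = ((Fin.last (m+1) : Fin (m+2)):ℕ) then (1:ℝ) else 0)
          + (if ((Fin.last (m+1) : Fin (m+2)):ℕ) = m+1 then c k else 0)))^2 else 0)) (m+2)]
  simp only [hlast, if_pos rfl, if_true]
  rw [Finset.sum_range_succ, if_neg (by omega)]
  rw [Finset.sum_congr rfl (fun k hk => by
    rw [if_pos (Finset.mem_range.1 hk)])]
  rw [Finset.sum_range_succ (fun k => (1/2 * ((if k+1 = m+1 then (1:ℝ) else 0) + c k))^2) m,
    if_pos rfl]
  rw [Finset.sum_congr rfl (fun k hk => by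
    rw [if_neg (by have := Finset.mem_range.1 hk; omega : ¬ k+1 = m+1)])]
  have h3 : ∑ k ∈ Finset.range m, (1/2 * ((0:ℝ) + c k))^2
      = 1/4 * ∑ k ∈ Finset.range m, c k ^ 2 := by
    rw [Finset.mul_sum]; exact Finset.sum_congr rfl (fun k _ => by ring)
  rw [h3, Finset.sum_range_succ (fun k => c k ^ 2) m]
  push_cast
  ring

lemma pd_proj {n : ℕ} (k j : Fin n) (x : Fin n → ℝ) :
    pd (fun y => y k) x j = if j = k then 1 else 0 := by
  have h : fderiv ℝ (fun y : Fin n → ℝ => y k) x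
      = (ContinuousLinearMap.proj k : (Fin n → ℝ) →L[ℝ] ℝ) :=
    (ContinuousLinearMap.proj k : (Fin n → ℝ) →L[ℝ] ℝ).fderiv
  rw [pd, h]
  simp [Pi.single_apply, eq_comm]

lemma pd_lin {n : ℕ} (c : Fin n → ℝ) (C : ℝ) (x : Fin n → ℝ) (i : Fin n) :
    pd (fun y => C - ∑ j, c j * y j) x i = - c i := by
  have hs : HasFDerivAt (fun y : Fin n → ℝ => ∑ j, c j * y j)
      (∑ j, c j • (ContinuousLinearMap.proj j : (Fin n → ℝ) →L[ℝ] ℝ)) x := by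
    apply HasFDerivAt.fun_sum
    intro j _
    exact ((ContinuousLinearMap.proj j : (Fin n → ℝ) →L[ℝ] ℝ).hasFDerivAt).const_mul (c j)
  have hd := hs.const_sub C
  rw [pd, hd.fderiv]
  simp [Pi.single_apply, eq_comm]

/-- for the non-homogeneous linear ODE of order `n`
`a₀ y⁽ⁿ⁾ + a₁ y⁽ⁿ⁻¹⁾ + … + a_{n-1} y' + aₙ y = b` with `a₀(t) ≠ 0`, reduced to a
first-order system via `f(t,x) = b/a₀ - ∑_{j=1}^{n} (a_{n-j+1}/a₀) xʲ`
(the 1-based index `j` corresponds to the 0-based index `j - 1`, so the 0-based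
coefficient of `xʲ` is `a_{n-j}/a₀`), the jet geometric Yang–Mills energy is
`(1/4)[n - 1 + 2 a₂(t)/a₀(t) + ∑_{j=2}^{n} a_j(t)²/a₀(t)²]`; in particular it
depends neither on `x` nor on the non-homogeneity term `b`. -/
theorem yang_mills_energy_of_nonhomogeneous_linear_superior_order_ode
    (n : ℕ) (hn : 2 ≤ n)
    (a : Fin (n + 1) → ℝ → ℝ) (b : ℝ → ℝ)
    (h0 : ∀ t : ℝ, a 0 t ≠ 0) :
    ∀ (t : ℝ) (x : Fin n → ℝ),
      ∑ p ∈ Finset.univ.filter (fun p : Fin n × Fin n => p.1 < p.2),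
          emF (sodeX n (fun t x => b t / a 0 t
              - ∑ j : Fin n, (a ⟨n - (j : ℕ), by omega⟩ t / a 0 t) * x j))
            t x p.1 p.2 ^ 2
        = (1 / 4) * ((n : ℝ) - 1 + 2 * (a ⟨2, by omega⟩ t / a 0 t)
            + ∑ j : Fin (n - 1),
                (a ⟨(j : ℕ) + 2, by omega⟩ t) ^ 2 / (a 0 t) ^ 2) := by
  intro t x
  obtain ⟨m, rfl⟩ : ∃ m, n = m + 2 := ⟨n - 2, by omega⟩
  -- the key formula for emF
  have hg : ∀ i j : Fin (m+2), i < j →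
      emF (sodeX (m+2) (fun t x => b t / a 0 t
          - ∑ j : Fin (m+2), (a ⟨m + 2 - (j : ℕ), by omega⟩ t / a 0 t) * x j)) t x i j
      = 1/2 * ((if (i:ℕ)+1 = (j:ℕ) then 1 else 0)
          + (if (j:ℕ) = m+1 then a ⟨m + 2 - (i:ℕ), by omega⟩ t / a 0 t else 0)) := by
    intro i j hij
    have hij' : (i:ℕ) < (j:ℕ) := hij
    have hjn : (j:ℕ) < m+2 := j.isLt
    have h1 : (i:ℕ)+1 < m+2 := by omega
    have e1 : (fun y : Fin (m+2) → ℝ => sodeX (m+2) (fun t x => b t / a 0 t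
          - ∑ j : Fin (m+2), (a ⟨m + 2 - (j : ℕ), by omega⟩ t / a 0 t) * x j) t y i)
        = fun y => y ⟨(i:ℕ)+1, h1⟩ := by
      funext y; simp only [sodeX, dif_pos h1]
    rw [emF, e1, pd_proj]
    by_cases h2 : (j:ℕ)+1 < m+2
    · have e2 : (fun y : Fin (m+2) → ℝ => sodeX (m+2) (fun t x => b t / a 0 t
            - ∑ j : Fin (m+2), (a ⟨m + 2 - (j : ℕ), by omega⟩ t / a 0 t) * x j) t y j)
          = fun y => y ⟨(j:ℕ)+1, h2⟩ := by
        funext y; simp only [sodeX, dif_pos h2]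
      rw [e2, pd_proj]
      have hmk : ((⟨(i:ℕ)+1, h1⟩ : Fin (m+2)) : ℕ) = (i:ℕ)+1 := rfl
      have hmk2 : ((⟨(j:ℕ)+1, h2⟩ : Fin (m+2)) : ℕ) = (j:ℕ)+1 := rfl
      simp only [Fin.ext_iff, hmk, hmk2]
      rw [if_neg (by omega : ¬ (i:ℕ) = (j:ℕ)+1), if_neg (by omega : ¬ (j:ℕ) = m+1)]
      rw [if_congr (by omega : ((j:ℕ) = (i:ℕ)+1) ↔ ((i:ℕ)+1 = (j:ℕ)))
        rfl rfl]
      ring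
    · have e2 : (fun y : Fin (m+2) → ℝ => sodeX (m+2) (fun t x => b t / a 0 t
            - ∑ j : Fin (m+2), (a ⟨m + 2 - (j : ℕ), by omega⟩ t / a 0 t) * x j) t y j)
          = fun y => b t / a 0 t
            - ∑ j : Fin (m+2), (a ⟨m + 2 - (j : ℕ), by omega⟩ t / a 0 t) * y j := by
        funext y; simp only [sodeX, dif_neg h2]
      rw [e2, pd_lin (fun j : Fin (m+2) => a ⟨m + 2 - (j : ℕ), by omega⟩ t / a 0 t)]
      have hmk : ((⟨(i:ℕ)+1, h1⟩ : Fin (m+2)) : ℕ) = (i:ℕ)+1 := rfl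
      simp only [Fin.ext_iff, hmk]
      rw [if_pos (by omega : (j:ℕ) = m+1)]
      rw [if_congr (by omega : ((j:ℕ) = (i:ℕ)+1) ↔ ((i:ℕ)+1 = (j:ℕ)))
        rfl rfl]
      ring
  -- rewrite the pair-sum as a double sum
  rw [Finset.sum_filter, Fintype.sum_prod_type_right]
  rw [Finset.sum_congr rfl (fun j (_ : j ∈ Finset.univ) =>
    Finset.sum_congr rfl (fun i (_ : i ∈ Finset.univ) => by
      show (if i < j then emF (sodeX (m+2) (fun t x => b t / a 0 t
          - ∑ j : Fin (m+2), (a ⟨m + 2 - (j : ℕ), by omega⟩ t / a 0 t) * x j)) t x i j ^ 2 else 0)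
        = (if (i:ℕ) < (j:ℕ) then
            (1/2 * ((if (i:ℕ)+1 = (j:ℕ) then (1:ℝ) else 0)
              + (if (j:ℕ) = m+1 then a ⟨m + 2 - (i:ℕ), by omega⟩ t / a 0 t else 0)))^2 else 0)
      by_cases h : i < j
      · rw [if_pos h, hg i j h, if_pos (show (i:ℕ) < (j:ℕ) from h)]
      · rw [if_neg h, if_neg (show ¬ (i:ℕ) < (j:ℕ) from fun hc' => h hc')]))]
  rw [key_sum m (fun k => a ⟨m + 2 - k, by omega⟩ t / a 0 t)]
  -- now identify the two closed forms
  have hcm : a ⟨m + 2 - m, by omega⟩ t = a ⟨2, by omega⟩ t := by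
    rw [show (⟨m + 2 - m, by omega⟩ : Fin (m+3)) = ⟨2, by omega⟩ from
      Fin.ext (show m + 2 - m = 2 by omega)]
  have hsum : (∑ j : Fin (m + 1), (a ⟨(j:ℕ) + 2, by omega⟩ t) ^ 2 / (a 0 t) ^ 2)
      = ∑ i ∈ Finset.range (m+1), (a ⟨m + 2 - i, by omega⟩ t / a 0 t) ^ 2 := by
    have hD : ∀ j : Fin (m+1), (a ⟨(j:ℕ)+2, by omega⟩ t)^2/(a 0 t)^2
        = (a ⟨min ((j:ℕ)+2) (m+2), by omega⟩ t)^2/(a 0 t)^2 := by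
      intro j
      rw [show (⟨(j:ℕ)+2, by omega⟩ : Fin (m+3)) = ⟨min ((j:ℕ)+2) (m+2), by omega⟩ from
        Fin.ext (show (j:ℕ)+2 = min ((j:ℕ)+2) (m+2) by omega)]
    rw [Finset.sum_congr rfl (fun j (_ : j ∈ Finset.univ) => hD j),
      Fin.sum_univ_eq_sum_range
        (fun k => (a ⟨min (k+2) (m+2), by omega⟩ t)^2/(a 0 t)^2) (m+1),
      ← Finset.sum_range_reflect
        (fun k => (a ⟨min (k+2) (m+2), by omega⟩ t)^2/(a 0 t)^2) (m+1)]
    refine Finset.sum_congr rfl (fun k hk => ?_)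
    have hkm : k ≤ m := by have := Finset.mem_range.1 hk; omega
    rw [div_pow, show (⟨min ((m+1-1-k)+2) (m+2), by omega⟩ : Fin (m+3))
      = ⟨m + 2 - k, by omega⟩ from Fin.ext (show min ((m+1-1-k)+2) (m+2) = m + 2 - k by omega)]
  rw [hcm]
  have goal2 : (1:ℝ)/4 * (↑m + 1 + 2 * (a ⟨2, by omega⟩ t / a 0 t)
        + ∑ i ∈ Finset.range (m + 1), (a ⟨m + 2 - i, by omega⟩ t / a 0 t) ^ 2)
      = 1/4 * ((↑(m+2) : ℝ) - 1 + 2 * (a ⟨2, by omega⟩ t / a 0 t)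
        + ∑ j : Fin (m+1), (a ⟨(j:ℕ)+2, by omega⟩ t)^2 / (a 0 t)^2) := by
    rw [hsum]
    push_cast
    ring
  exact goal2
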